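/- Let π0, π1 : [0,1] → [0,1] be a proper binarized scoring rule, let the agent have actual belief μ ∈ (0,1) and state-dependent utilities with Δu0 > 0 and Δu1 > 0, and suppose the report p ∈ (0,1) is optimal for her (V(p) ≥ V(r) for all r ∈ [0,1]). Then the reported belief satisfies the identity p/(1−p) = (μ/(1−μ)) · (Δu1/Δu0). -/

import Mathlib

open Filter Topology

theorem optimal_report_identity
    (pi0 pi1 : ℝ → ℝ)
    (hpi0 : ∀ r ∈ Set.Icc (0:ℝ) 1, pi0 r ∈ Set.Icc (0:ℝ) 1)
    (hpi1 : ∀ r ∈ Set.Icc (0:ℝ) 1, pi1 r ∈ Set.Icc (0:ℝ) 1)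
    (hproper : ∀ q ∈ Set.Icc (0:ℝ) 1, ∀ r ∈ Set.Icc (0:ℝ) 1, r ≠ q →
      (1 - q) * pi0 r + q * pi1 r < (1 - q) * pi0 q + q * pi1 q)
    (μ : ℝ) (hμ : μ ∈ Set.Ioo (0:ℝ) 1)
    (u0l u0h u1l u1h : ℝ) (hu0 : u0l < u0h) (hu1 : u1l < u1h)
    (p : ℝ) (hp : p ∈ Set.Ioo (0:ℝ) 1)
    (hopt : ∀ r ∈ Set.Icc (0:ℝ) 1,
      (1 - μ) * (pi0 r * u0h + (1 - pi0 r) * u0l) + μ * (pi1 r * u1h + (1 - pi1 r) * u1l) ≤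
      (1 - μ) * (pi0 p * u0h + (1 - pi0 p) * u0l) + μ * (pi1 p * u1h + (1 - pi1 p) * u1l))
    : p / (1 - p) = (μ / (1 - μ)) * ((u1h - u1l) / (u0h - u0l)) := by
  obtain ⟨hμ0, hμ1⟩ := hμ
  obtain ⟨hp0, hp1⟩ := hp
  set a : ℝ := (1 - μ) * (u0h - u0l) with ha
  set b : ℝ := μ * (u1h - u1l) with hb
  have hapos : 0 < a := mul_pos (by linarith) (by linarith)
  have hbpos : 0 < b := mul_pos hμ0 (by linarith)
  have habpos : 0 < a + b := by linarith
  set q : ℝ := b / (a + b) with hq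
  have hq0 : 0 < q := div_pos hbpos habpos
  have hq1 : q < 1 := (div_lt_one habpos).mpr (by linarith)
  have h1q : 1 - q = a / (a + b) := by
    field_simp [hq]
    rw [hq, sub_mul, div_mul_cancel₀ _ (ne_of_gt habpos)]; ring
  -- show p = q
  have hpq : p = q := by
    by_contra hne
    have hQmem : q ∈ Set.Icc (0:ℝ) 1 := ⟨le_of_lt hq0, le_of_lt hq1⟩
    have hprop := hproper q hQmem p ⟨le_of_lt hp0, le_of_lt hp1⟩ hne
    have hO := hopt q hQmem
    -- multiply hprop by (a+b)
    have key : a * pi0 p + b * pi1 p < a * pi0 q + b * pi1 q := by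
      have := mul_lt_mul_of_pos_left hprop habpos
      have e1 : (a + b) * ((1 - q) * pi0 p + q * pi1 p)
          = a * pi0 p + b * pi1 p := by
        rw [h1q, hq]; field_simp
      have e2 : (a + b) * ((1 - q) * pi0 q + q * pi1 q)
          = a * pi0 q + b * pi1 q := by
        rw [h1q, hq]; field_simp
      linarith [e1 ▸ e2 ▸ this]
    -- hO rewritten
    have hO' : a * pi0 q + b * pi1 q ≤ a * pi0 p + b * pi1 p := by
      simp only [ha, hb]
      nlinarith [hO]
    linarith
  have hane : a ≠ 0 := ne_of_gt hapos
  have habne : a + b ≠ 0 := ne_of_gt habpos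
  have hμne : (1:ℝ) - μ ≠ 0 := by linarith
  have hu0ne : u0h - u0l ≠ 0 := by linarith
  rw [hpq, hq, h1q]
  have hred : b / (a + b) / (a / (a + b)) = b / a := by
    rw [div_div_div_eq]
    rw [mul_comm b (a+b), mul_div_mul_left _ _ habne]
  rw [hred]
  simp only [ha, hb]
  rw [div_mul_div_comm]
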